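/- arXiv:1209.2068 — 4 statements merged into one kernel-verified Lean document; each statement's English description precedes it below -/
import Mathlib

section
/- Let g₁, g₂, g₃ be commuting finite-order automorphisms of a finite-dimensional complex vector space V with g₁g₂g₃ = 1. Then L(g₁)(V) + L(g₂)(V) + L(g₃)(V) − dim V + dim V^{g₁,g₂} is a non-negative integer, where V^{g₁,g₂} is the common fixed subspace of g₁ and g₂. -/
open Module Module.End Finset Polynomial

set_option maxHeartbeats 1000000

private lemma finrank_biSup_eq_sum' {K V : Type*} [Field K] [AddCommGroup V] [Module K V]
    [FiniteDimensional K V] {ι : Type*} {p : ι → Submodule K V}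
    (h : iSupIndep p) (s : Finset ι) :
    Module.finrank K ↥(⨆ i ∈ s, p i) = ∑ i ∈ s, Module.finrank K ↥(p i) := by
  classical
  induction s using Finset.induction_on with
  | empty => simp
  | @insert a s ha ih =>
    have hdisj : Disjoint (p a) (⨆ i ∈ s, p i) := by
      simpa using h.disjoint_biSup (y := (↑s : Set ι)) (by simpa using ha)
    have key := Submodule.finrank_sup_add_finrank_inf_eq (p a) (⨆ i ∈ s, p i)
    rw [hdisj.eq_bot, finrank_bot] at key
    rw [Finset.iSup_insert, Finset.sum_insert ha, ← ih]
    omega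

private lemma eigen_pow_eq_one' {V : Type*} [AddCommGroup V] [Module ℂ V]
    {f : Module.End ℂ V} {n : ℕ} (hf : f ^ n = 1) {μ : ℂ}
    (h : f.eigenspace μ ≠ ⊥) : μ ^ n = 1 := by
  obtain ⟨v, hv, hv0⟩ := (Submodule.ne_bot_iff _).mp h
  have hfv : f v = μ • v := mem_eigenspace_iff.mp hv
  have key : ∀ k : ℕ, (f ^ k) v = μ ^ k • v := by
    intro k; induction k with
    | zero => simp
    | succ k ih =>
      rw [pow_succ, Module.End.mul_apply, hfv, map_smul, ih, smul_smul, pow_succ, mul_comm]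
  have h2 := key n
  rw [hf] at h2
  have h3 : (μ ^ n - 1) • v = 0 := by
    rw [sub_smul, one_smul, ← h2, Module.End.one_apply, sub_self]
  rcases smul_eq_zero.mp h3 with h4 | h4
  · linear_combination h4
  · exact absurd h4 hv0



/-- The logarithmic trace `L(g)(V)` of an automorphism `g` with `g ^ n = 1`:
the sum over `k < n` of `(k/n) · dim V_{k/n}`, where `V_{k/n}` is the eigenspace
of `g` for the eigenvalue `exp(2πi·k/n)`. -/
noncomputable def logTrace {V : Type} [AddCommGroup V] [Module ℂ V]
    (n : ℕ) (g : V →ₗ[ℂ] V) : ℚ :=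
  ∑ k ∈ Finset.range n, (k : ℚ) / (n : ℚ) *
    (Module.finrank ℂ
      (Module.End.eigenspace g (Complex.exp (2 * (Real.pi : ℂ) * Complex.I * ((k : ℂ) / (n : ℂ))))) : ℚ)

/-- For commuting finite-order automorphisms `g₁ g₂ g₃` with `g₁g₂g₃ = 1`,
`L(g₁)(V) + L(g₂)(V) + L(g₃)(V) − dim V + dim V^{g₁,g₂}` is a non-negative integer. -/
theorem logTrace_triple_nonneg_integer {V : Type} [AddCommGroup V] [Module ℂ V]
    [FiniteDimensional ℂ V] (g₁ g₂ g₃ : V ≃ₗ[ℂ] V) (n : ℕ) (hn : 0 < n)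
    (h₁ : g₁ ^ n = 1) (h₂ : g₂ ^ n = 1) (h₃ : g₃ ^ n = 1)
    (hc₁₂ : g₁ * g₂ = g₂ * g₁) (hc₁₃ : g₁ * g₃ = g₃ * g₁) (hc₂₃ : g₂ * g₃ = g₃ * g₂)
    (hprod : g₁ * g₂ * g₃ = 1) :
    ∃ m : ℕ,
      logTrace n (g₁ : V →ₗ[ℂ] V) + logTrace n (g₂ : V →ₗ[ℂ] V)
        + logTrace n (g₃ : V →ₗ[ℂ] V)
        - (Module.finrank ℂ V : ℚ)
        + (Module.finrank ℂ
            ((Module.End.eigenspace (g₁ : V →ₗ[ℂ] V) 1 ⊓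
              Module.End.eigenspace (g₂ : V →ₗ[ℂ] V) 1 : Submodule ℂ V)) : ℚ) = m := by
  classical
  haveI : NeZero n := ⟨hn.ne'⟩
  set f₁ : Module.End ℂ V := (g₁ : V →ₗ[ℂ] V) with hf₁def
  set f₂ : Module.End ℂ V := (g₂ : V →ₗ[ℂ] V) with hf₂def
  set f₃ : Module.End ℂ V := (g₃ : V →ₗ[ℂ] V) with hf₃def
  have coe_pow : ∀ (g : V ≃ₗ[ℂ] V) (k : ℕ),
      ((g ^ k : V ≃ₗ[ℂ] V) : V →ₗ[ℂ] V) = (g : V →ₗ[ℂ] V) ^ k := by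
    intro g k
    induction k with
    | zero => rfl
    | succ k ih => rw [pow_succ, pow_succ, ← ih]; rfl
  have hp₁ : f₁ ^ n = 1 := by rw [hf₁def, ← coe_pow, h₁]; rfl
  have hp₂ : f₂ ^ n = 1 := by rw [hf₂def, ← coe_pow, h₂]; rfl
  have hp₃ : f₃ ^ n = 1 := by rw [hf₃def, ← coe_pow, h₃]; rfl
  have hcomm₁₂ : f₁ * f₂ = f₂ * f₁ :=
    congrArg (fun g : V ≃ₗ[ℂ] V => (g : V →ₗ[ℂ] V)) hc₁₂
  have hcomm₁₃ : f₁ * f₃ = f₃ * f₁ :=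
    congrArg (fun g : V ≃ₗ[ℂ] V => (g : V →ₗ[ℂ] V)) hc₁₃
  have hcomm₂₃ : f₂ * f₃ = f₃ * f₂ :=
    congrArg (fun g : V ≃ₗ[ℂ] V => (g : V →ₗ[ℂ] V)) hc₂₃
  have hprod' : f₁ * f₂ * f₃ = 1 :=
    congrArg (fun g : V ≃ₗ[ℂ] V => (g : V →ₗ[ℂ] V)) hprod
  have hnC : (n : ℂ) ≠ 0 := by exact_mod_cast hn.ne'
  have hnQ : (n : ℚ) ≠ 0 := by exact_mod_cast hn.ne'
  set ζ : ℂ := Complex.exp (2 * (Real.pi : ℂ) * Complex.I / n) with hζdef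
  have hζ : IsPrimitiveRoot ζ n := Complex.isPrimitiveRoot_exp n hn.ne'
  -- maxGen = eigen for our maps
  have hmax : ∀ f : Module.End ℂ V, f ^ n = 1 → ∀ μ : ℂ,
      f.maxGenEigenspace μ = f.eigenspace μ := by
    intro f hf μ
    have hsep : Squarefree (X ^ n - C (1 : ℂ)) :=
      (Polynomial.separable_X_pow_sub_C (1 : ℂ) (by exact_mod_cast hn.ne') one_ne_zero).squarefree
    have hz : aeval f (X ^ n - C (1 : ℂ)) = 0 := by
      simp [map_sub, map_pow, aeval_X, hf]
    exact (isSemisimple_of_squarefree_aeval_eq_zero hsep hz).isFinitelySemisimple.maxGenEigenspace_eq_eigenspace μ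
  -- the simultaneous eigenspaces
  set W : Fin n × Fin n → Submodule ℂ V :=
    fun p => (f₁.eigenspace (ζ ^ (p.1 : ℕ))) ⊓ (f₂.eigenspace (ζ ^ (p.2 : ℕ))) with hWdef
  have hiInf2 : ∀ (χ : Fin 2 → ℂ),
      (⨅ i, (![f₁, f₂] i).maxGenEigenspace (χ i))
        = f₁.eigenspace (χ 0) ⊓ f₂.eigenspace (χ 1) := by
    intro χ
    have : (⨅ i, (![f₁, f₂] i).maxGenEigenspace (χ i))
        = (![f₁, f₂] 0).maxGenEigenspace (χ 0) ⊓ (![f₁, f₂] 1).maxGenEigenspace (χ 1) := by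
      refine le_antisymm (le_inf (iInf_le _ 0) (iInf_le _ 1)) (le_iInf fun i => ?_)
      fin_cases i <;> simp
    rw [this]
    simp [hmax f₁ hp₁, hmax f₂ hp₂]
  have hWind : iSupIndep W := by
    have h0 : iSupIndep fun χ : Fin 2 → ℂ => ⨅ i, (![f₁, f₂] i).maxGenEigenspace (χ i) := by
      apply independent_iInf_maxGenEigenspace_of_forall_mapsTo
      intro i j φ
      apply mapsTo_maxGenEigenspace_of_comm
      fin_cases i <;> fin_cases j <;> simp_all [Commute, SemiconjBy]
    have hinj : Function.Injective
        (fun p : Fin n × Fin n => (![ζ ^ (p.1 : ℕ), ζ ^ (p.2 : ℕ)] : Fin 2 → ℂ)) := by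
      intro p q hpq
      have e0 := congrFun hpq 0
      have e1 := congrFun hpq 1
      simp only [Matrix.cons_val_zero, Matrix.cons_val_one, Matrix.head_cons] at e0 e1
      exact Prod.ext (Fin.ext (hζ.pow_inj p.1.2 q.1.2 e0)) (Fin.ext (hζ.pow_inj p.2.2 q.2.2 e1))
    have h1 := h0.comp hinj
    have hWeq : W = (fun χ : Fin 2 → ℂ => ⨅ i, (![f₁, f₂] i).maxGenEigenspace (χ i)) ∘
        (fun p : Fin n × Fin n => (![ζ ^ (p.1 : ℕ), ζ ^ (p.2 : ℕ)] : Fin 2 → ℂ)) := by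
      funext p
      rw [Function.comp_apply, hiInf2]
      simp only [Matrix.cons_val_zero, Matrix.cons_val_one, Matrix.head_cons]
      rfl
    rw [hWeq]
    exact h1
  have hWtop : ⨆ p, W p = ⊤ := by
    rw [eq_top_iff]
    have hspan : ⨆ χ : Fin 2 → ℂ, ⨅ i, (![f₁, f₂] i).maxGenEigenspace (χ i) = ⊤ := by
      apply iSup_iInf_maxGenEigenspace_eq_top_of_iSup_maxGenEigenspace_eq_top_of_commute
      · intro i j hij
        fin_cases i <;> fin_cases j <;> simp_all [Commute, SemiconjBy]
      · exact fun i => iSup_maxGenEigenspace_eq_top _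
    rw [← hspan]
    apply iSup_le
    intro χ
    rw [hiInf2]
    rcases eq_or_ne (f₁.eigenspace (χ 0) ⊓ f₂.eigenspace (χ 1)) ⊥ with hb | hb
    · rw [hb]; exact bot_le
    · have hne1 : f₁.eigenspace (χ 0) ≠ ⊥ := by
        intro h; exact hb (le_bot_iff.mp (inf_le_left.trans_eq h))
      have hne2 : f₂.eigenspace (χ 1) ≠ ⊥ := by
        intro h; exact hb (le_bot_iff.mp (inf_le_right.trans_eq h))
      obtain ⟨a, ha, haa⟩ := hζ.eq_pow_of_pow_eq_one (eigen_pow_eq_one' hp₁ hne1)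
      obtain ⟨b, hbn, hbb⟩ := hζ.eq_pow_of_pow_eq_one (eigen_pow_eq_one' hp₂ hne2)
      refine le_trans ?_ (le_iSup W (⟨⟨a, ha⟩, ⟨b, hbn⟩⟩ : Fin n × Fin n))
      rw [← haa, ← hbb]
  set d : Fin n × Fin n → ℕ := fun p => finrank ℂ (W p) with hddef
  set N := finrank ℂ V with hNdef
  have hNsum : ∑ p, d p = N := by
    have h := finrank_biSup_eq_sum' hWind univ
    rw [show (⨆ p ∈ univ, W p) = ⨆ p, W p by simp, hWtop, finrank_top] at h
    exact h.symm
  -- the dimension lemma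
  have dimlem : ∀ (f : Module.End ℂ V), f ^ n = 1 → ∀ (κ : Fin n × Fin n → Fin n),
      (∀ p, W p ≤ f.eigenspace (ζ ^ ((κ p : ℕ)))) →
      ∀ a : Fin n, finrank ℂ (f.eigenspace (ζ ^ (a : ℕ)))
        = ∑ p ∈ univ.filter (fun p => κ p = a), d p := by
    intro f hfn κ hκ
    have hEind : iSupIndep (fun a : Fin n => f.eigenspace (ζ ^ (a : ℕ))) :=
      f.eigenspaces_iSupIndep.comp (fun a b hab => Fin.ext (hζ.pow_inj a.2 b.2 hab))
    have hle : ∀ a : Fin n, ∑ p ∈ univ.filter (fun p => κ p = a), d p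
        ≤ finrank ℂ (f.eigenspace (ζ ^ (a : ℕ))) := by
      intro a
      rw [← finrank_biSup_eq_sum' hWind]
      refine Submodule.finrank_mono (iSup₂_le fun p hp => ?_)
      have hpa : κ p = a := (Finset.mem_filter.mp hp).2
      have := hκ p
      rwa [hpa] at this
    have hsum1 : ∑ a : Fin n, ∑ p ∈ univ.filter (fun p => κ p = a), d p = N := by
      rw [Finset.sum_fiberwise univ κ d]; exact hNsum
    have hsum2 : ∑ a : Fin n, finrank ℂ (f.eigenspace (ζ ^ (a : ℕ))) ≤ N := by
      rw [← finrank_biSup_eq_sum' hEind univ]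
      exact Submodule.finrank_le _
    have heq : ∑ a : Fin n, ∑ p ∈ univ.filter (fun p => κ p = a), d p
        = ∑ a : Fin n, finrank ℂ (f.eigenspace (ζ ^ (a : ℕ))) :=
      le_antisymm (Finset.sum_le_sum fun a _ => hle a) (by rw [hsum1]; exact hsum2)
    intro a
    exact ((Finset.sum_eq_sum_iff_of_le fun i _ => hle i).mp heq a (mem_univ a)).symm
  have hE1 := dimlem f₁ hp₁ Prod.fst (fun p => inf_le_left)
  have hE2 := dimlem f₂ hp₂ Prod.snd (fun p => inf_le_right)
  -- third classifier
  set κ₃ : Fin n × Fin n → Fin n :=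
    fun p => ⟨(2 * n - ((p.1 : ℕ) + (p.2 : ℕ))) % n, Nat.mod_lt _ hn⟩ with hκ₃def
  have hκ₃dvd : ∀ p : Fin n × Fin n, n ∣ ((p.1 : ℕ) + (p.2 : ℕ) + (κ₃ p : ℕ)) := by
    intro p
    have hs : (p.1 : ℕ) + (p.2 : ℕ) ≤ 2 * n := by
      have := p.1.2; have := p.2.2; omega
    apply Nat.dvd_of_mod_eq_zero
    show ((p.1 : ℕ) + (p.2 : ℕ) + (2 * n - ((p.1 : ℕ) + (p.2 : ℕ))) % n) % n = 0
    rw [Nat.add_mod_mod, show (p.1 : ℕ) + (p.2 : ℕ) + (2 * n - ((p.1 : ℕ) + (p.2 : ℕ))) = 2 * n by omega,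
      Nat.mul_mod_left]
  have hW3 : ∀ p, W p ≤ f₃.eigenspace (ζ ^ ((κ₃ p : ℕ))) := by
    intro p v hv
    obtain ⟨hv1, hv2⟩ := Submodule.mem_inf.mp hv
    have hv1' : f₁ v = ζ ^ (p.1 : ℕ) • v := mem_eigenspace_iff.mp hv1
    have hv2' : f₂ v = ζ ^ (p.2 : ℕ) • v := mem_eigenspace_iff.mp hv2
    rw [mem_eigenspace_iff]
    -- f₂ (f₃ v) = ζ^b • f₃ v
    have h23 : f₂ (f₃ v) = ζ ^ (p.2 : ℕ) • f₃ v := by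
      have := congrArg (fun φ : Module.End ℂ V => φ v) hcomm₂₃
      simp only [Module.End.mul_apply] at this
      rw [this, hv2', map_smul]
    have h13 : f₁ (f₃ v) = ζ ^ (p.1 : ℕ) • f₃ v := by
      have := congrArg (fun φ : Module.End ℂ V => φ v) hcomm₁₃
      simp only [Module.End.mul_apply] at this
      rw [this, hv1', map_smul]
    have hkey : f₁ (f₂ (f₃ v)) = v := by
      have := congrArg (fun φ : Module.End ℂ V => φ v) hprod'
      simpa [Module.End.mul_apply] using this
    have hstep : f₁ (f₂ (f₃ v)) = ζ ^ (p.2 : ℕ) • ζ ^ (p.1 : ℕ) • f₃ v := by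
      rw [h23, map_smul, h13]
    have hab : ζ ^ (p.2 : ℕ) • ζ ^ (p.1 : ℕ) • f₃ v = v := by
      rw [← hstep, hkey]
    have hone : ζ ^ ((p.1 : ℕ) + (p.2 : ℕ) + (κ₃ p : ℕ)) = 1 :=
      (hζ.pow_eq_one_iff_dvd _).mpr (hκ₃dvd p)
    calc f₃ v = (ζ ^ ((p.1 : ℕ) + (p.2 : ℕ) + (κ₃ p : ℕ))) • f₃ v := by rw [hone, one_smul]
      _ = ζ ^ (κ₃ p : ℕ) • ζ ^ (p.2 : ℕ) • ζ ^ (p.1 : ℕ) • f₃ v := by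
          rw [smul_smul, smul_smul, ← pow_add, ← pow_add]
          congr 2
          omega
      _ = ζ ^ (κ₃ p : ℕ) • v := by rw [hab]
  have hE3 := dimlem f₃ hp₃ κ₃ hW3
  -- the fixed subspace is W (0, 0)
  have hfix : (Module.End.eigenspace f₁ 1 ⊓ Module.End.eigenspace f₂ 1 : Submodule ℂ V)
      = W ((0 : Fin n), (0 : Fin n)) := by
    show _ = f₁.eigenspace (ζ ^ (((0 : Fin n) : ℕ))) ⊓ f₂.eigenspace (ζ ^ (((0 : Fin n) : ℕ)))
    simp
  -- rewrite logTrace as a sum over Fin n with eigenvalues ζ ^ a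
  have hlog : ∀ f : Module.End ℂ V, logTrace n f
      = ∑ a : Fin n, (((a : ℕ) : ℚ) / n) * (finrank ℂ (f.eigenspace (ζ ^ (a : ℕ))) : ℚ) := by
    intro f
    unfold logTrace
    rw [← Fin.sum_univ_eq_sum_range (fun k => (k : ℚ) / n *
      (finrank ℂ (f.eigenspace (Complex.exp (2 * (Real.pi : ℂ) * Complex.I * ((k : ℂ) / n)))) : ℚ)) n]
    refine Finset.sum_congr rfl fun a _ => ?_
    have hval : Complex.exp (2 * (Real.pi : ℂ) * Complex.I * (((a : ℕ) : ℂ) / n)) = ζ ^ (a : ℕ) := by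
      rw [hζdef, ← Complex.exp_nat_mul]
      congr 1
      field_simp
    rw [hval]
  -- fiberwise resummation
  have fib : ∀ κ : Fin n × Fin n → Fin n,
      ∑ a : Fin n, (((a : ℕ) : ℚ) / n) * ∑ p ∈ univ.filter (fun p => κ p = a), (d p : ℚ)
        = ∑ p : Fin n × Fin n, (((κ p : ℕ) : ℚ) / n) * (d p : ℚ) := by
    intro κ
    rw [← Finset.sum_fiberwise univ κ (fun p => (((κ p : ℕ) : ℚ) / n) * (d p : ℚ))]
    refine Finset.sum_congr rfl fun a _ => ?_
    rw [Finset.mul_sum]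
    refine Finset.sum_congr rfl fun p hp => ?_
    rw [(Finset.mem_filter.mp hp).2]
  have hLT : ∀ (f : Module.End ℂ V) (κ : Fin n × Fin n → Fin n),
      (∀ a : Fin n, finrank ℂ (f.eigenspace (ζ ^ (a : ℕ)))
        = ∑ p ∈ univ.filter (fun p => κ p = a), d p) →
      logTrace n f = ∑ p : Fin n × Fin n, (((κ p : ℕ) : ℚ) / n) * (d p : ℚ) := by
    intro f κ hκ
    rw [hlog f, ← fib κ]
    refine Finset.sum_congr rfl fun a _ => ?_
    rw [hκ a]
    push_cast
    ring
  rw [hLT f₁ Prod.fst hE1, hLT f₂ Prod.snd hE2, hLT f₃ κ₃ hE3]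
  -- the nonnegative integer
  refine ⟨∑ p ∈ univ.filter (fun p : Fin n × Fin n => n < (p.1 : ℕ) + (p.2 : ℕ)), d p, ?_⟩
  have hNQ : (N : ℚ) = ∑ p : Fin n × Fin n, (d p : ℚ) := by
    rw [← hNsum]; push_cast; rfl
  have hfixQ : ((finrank ℂ
      ((Module.End.eigenspace f₁ 1 ⊓ Module.End.eigenspace f₂ 1 : Submodule ℂ V))) : ℚ)
      = ∑ p : Fin n × Fin n, (if p = ((0 : Fin n), (0 : Fin n)) then (d p : ℚ) else 0) := by
    rw [Finset.sum_ite_eq' univ (((0 : Fin n), (0 : Fin n)) : Fin n × Fin n)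
      (fun p => (d p : ℚ)), if_pos (mem_univ _), hfix]
  have hmQ : ((∑ p ∈ univ.filter (fun p : Fin n × Fin n => n < (p.1 : ℕ) + (p.2 : ℕ)), d p : ℕ) : ℚ)
      = ∑ p : Fin n × Fin n, (if n < (p.1 : ℕ) + (p.2 : ℕ) then (d p : ℚ) else 0) := by
    rw [Finset.sum_filter]
    push_cast
    rfl
  rw [hNQ, hfixQ, hmQ]
  rw [← Finset.sum_add_distrib, ← Finset.sum_add_distrib, ← Finset.sum_sub_distrib,
    ← Finset.sum_add_distrib]
  refine Finset.sum_congr rfl fun p _ => ?_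
  -- per-point identity
  obtain ⟨k, hk⟩ := hκ₃dvd p
  have ha := p.1.2
  have hb := p.2.2
  have hcn : ((κ₃ p : Fin n) : ℕ) < n := (κ₃ p).2
  have hk3 : k < 3 := by
    rcases Nat.lt_or_ge k 3 with h | h
    · exact h
    · exfalso
      have h2 : n * 3 ≤ n * k := Nat.mul_le_mul_left n h
      rw [← hk] at h2
      omega
  have hdiv : (((p.1 : ℕ) : ℚ) / n + ((p.2 : ℕ) : ℚ) / n + ((κ₃ p : ℕ) : ℚ) / n) = k := by
    have : (((p.1 : ℕ) : ℚ) + ((p.2 : ℕ) : ℚ) + ((κ₃ p : ℕ) : ℚ)) = n * k := by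
      exact_mod_cast congrArg (fun x : ℕ => (x : ℚ)) hk
    field_simp
    linarith
  interval_cases k
  · -- k = 0 : p = (0,0)
    have h0 : (p.1 : ℕ) = 0 ∧ (p.2 : ℕ) = 0 := by omega
    have hp0 : p = ((0 : Fin n), (0 : Fin n)) := by
      refine Prod.ext (Fin.ext ?_) (Fin.ext ?_) <;> simp [h0.1, h0.2]
    rw [if_pos hp0, if_neg (by omega : ¬ n < (p.1 : ℕ) + (p.2 : ℕ))]
    linear_combination (d p : ℚ) * hdiv
  · -- k = 1
    have hab : ¬((p.1 : ℕ) = 0 ∧ (p.2 : ℕ) = 0) := by omega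
    have hp0 : p ≠ ((0 : Fin n), (0 : Fin n)) := by
      intro h
      apply hab
      rw [h]
      simp
    rw [if_neg hp0, if_neg (by omega : ¬ n < (p.1 : ℕ) + (p.2 : ℕ))]
    linear_combination (d p : ℚ) * hdiv
  · -- k = 2
    have hab : ¬((p.1 : ℕ) = 0 ∧ (p.2 : ℕ) = 0) := by omega
    have hp0 : p ≠ ((0 : Fin n), (0 : Fin n)) := by
      intro h
      apply hab
      rw [h]
      simp
    rw [if_neg hp0, if_pos (by omega : n < (p.1 : ℕ) + (p.2 : ℕ))]
    linear_combination (d p : ℚ) * hdiv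
end

section
/- Let g₁, g₂ be commuting finite-order automorphisms of a finite-dimensional complex vector space V. Then the quantity L(g₁)(V) + L(g₂)(V) − L(g₁g₂)(V) is a non-negative integer. -/
open Module Finset Polynomial

section Aux

variable {V : Type} [AddCommGroup V] [Module ℂ V] [FiniteDimensional ℂ V]

/-- finrank of a sup of a `SupIndep` finite family is the sum of the finranks. -/
lemma aux_finrank_sup {ι : Type} [DecidableEq ι] (s : Finset ι) (W : ι → Submodule ℂ V)
    (h : s.SupIndep W) :
    Module.finrank ℂ (s.sup W : Submodule ℂ V) = ∑ i ∈ s, Module.finrank ℂ (W i) := by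
  classical
  induction s using Finset.induction_on with
  | empty => simp
  | @insert a s ha ih =>
    rw [Finset.sup_insert, Finset.sum_insert ha]
    have hd : Disjoint (W a) (s.sup W) :=
      h (Finset.subset_insert a s) (Finset.mem_insert_self a s) ha
    have hkey := Submodule.finrank_sup_add_finrank_inf_eq (W a) (s.sup W)
    rw [hd.eq_bot] at hkey
    simp only [finrank_bot, add_zero] at hkey
    rw [hkey, ih (h.subset (Finset.subset_insert a s))]

/-- A family of subspaces of eigenspaces for pairwise distinct eigenvalues is `SupIndep`. -/
lemma aux_supIndep (f : Module.End ℂ V) {ι : Type} (s : Finset ι) (μ : ι → ℂ)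
    (hinj : Set.InjOn μ ↑s) (W : ι → Submodule ℂ V)
    (hW : ∀ i ∈ s, W i ≤ f.eigenspace (μ i)) :
    s.SupIndep W := by
  intro t ht i hi hit
  have h1 : Disjoint (f.eigenspace (μ i)) (⨆ (c : ℂ) (_ : c ≠ μ i), f.eigenspace c) :=
    f.eigenspaces_iSupIndep (μ i)
  refine h1.mono (hW i hi) ?_
  refine Finset.sup_le fun j hj => ?_
  have hji : μ j ≠ μ i := by
    intro e
    exact hit (hinj (ht hj) hi e ▸ hj)
  exact (hW j (ht (by exact hj))).trans
    (le_iSup₂ (f := fun (c : ℂ) (_ : c ≠ μ i) => f.eigenspace c) (μ j) hji)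

/-- For `f` with `f ^ n = 1`, the eigenspaces for the `n`-th roots of unity span. -/
lemma aux_sup_eq_top (f : Module.End ℂ V) {n : ℕ} (hn : 0 < n) {ζ : ℂ}
    (hζ : IsPrimitiveRoot ζ n) (hf : f ^ n = 1) :
    (Finset.range n).sup (fun k => f.eigenspace (ζ ^ k)) = ⊤ := by
  haveI : NeZero n := ⟨hn.ne'⟩
  have hss : f.IsSemisimple := by
    apply Module.End.isSemisimple_of_squarefree_aeval_eq_zero
      (p := (X : ℂ[X]) ^ n - 1)
    · exact (Polynomial.X_pow_sub_one_separable_iff.mpr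
        (by exact_mod_cast Nat.cast_ne_zero.mpr hn.ne')).squarefree
    · simp [map_sub, map_pow, hf]
  have h1 : ⨆ μ : ℂ, f.eigenspace μ = ⊤ := by
    simpa only [hss.isFinitelySemisimple.maxGenEigenspace_eq_eigenspace] using
      Module.End.iSup_maxGenEigenspace_eq_top f
  rw [← top_le_iff, ← h1]
  refine iSup_le fun μ => ?_
  by_cases hbot : f.eigenspace μ = ⊥
  · simp [hbot]
  · obtain ⟨v, hv⟩ := Module.End.HasEigenvalue.exists_hasEigenvector hbot
    have hμn : μ ^ n = 1 := by
      have h3 := hv.pow_apply n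
      rw [hf] at h3
      have h4 : μ ^ n • v = (1 : ℂ) • v := by
        rw [one_smul]; exact h3.symm.trans rfl
      exact smul_left_injective ℂ hv.2 h4
    obtain ⟨k, hk, hke⟩ := hζ.eq_pow_of_pow_eq_one hμn
    rw [← hke]
    exact Finset.le_sup (f := fun k => f.eigenspace (ζ ^ k)) (Finset.mem_range.mpr hk)

/-- For `f` with `f ^ n = 1`, `dim V` is the sum of dimensions of eigenspaces. -/
lemma aux_finrank_eq_sum (f : Module.End ℂ V) {n : ℕ} (hn : 0 < n) {ζ : ℂ}
    (hζ : IsPrimitiveRoot ζ n) (hf : f ^ n = 1) :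
    Module.finrank ℂ V = ∑ k ∈ Finset.range n, Module.finrank ℂ (f.eigenspace (ζ ^ k)) := by
  classical
  have hind : (Finset.range n).SupIndep (fun k => f.eigenspace (ζ ^ k)) := by
    refine aux_supIndep f _ (fun k => ζ ^ k) ?_ _ (fun i _ => le_rfl)
    intro i hi j hj e
    exact hζ.pow_inj (Finset.mem_range.mp hi) (Finset.mem_range.mp hj) e
  have h := aux_finrank_sup (Finset.range n) (fun k => f.eigenspace (ζ ^ k)) hind
  rw [aux_sup_eq_top f hn hζ hf] at h
  simpa [finrank_top] using h

/-- Eigenspace of a restriction has finrank that of the intersection. -/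
lemma aux_eigenspace_restrict (f : Module.End ℂ V) (p : Submodule ℂ V)
    (hfp : ∀ x ∈ p, f x ∈ p) (μ : ℂ) :
    Module.finrank ℂ (Module.End.eigenspace (f.restrict hfp) μ)
      = Module.finrank ℂ (f.eigenspace μ ⊓ p : Submodule ℂ V) := by
  have he : Module.End.eigenspace (f.restrict hfp) μ
      = (f.eigenspace μ ⊓ p).comap p.subtype := by
    ext x
    simp only [Module.End.mem_eigenspace_iff, Submodule.mem_comap, Submodule.coe_subtype,
      Submodule.mem_inf]
    constructor
    · intro h
      refine ⟨?_, x.2⟩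
      have := congrArg (Submodule.subtype p) h
      simpa [LinearMap.restrict_apply] using this
    · intro h
      apply Subtype.ext
      simpa [LinearMap.restrict_apply] using h.1
  rw [he]
  exact (Submodule.comapSubtypeEquivOfLe inf_le_right).finrank_eq

/-- For a `g`-invariant subspace `p` with `g ^ n = 1`, `dim p` splits along eigenspaces of `g`. -/
lemma aux_finrank_split (g : Module.End ℂ V) {n : ℕ} (hn : 0 < n) {ζ : ℂ}
    (hζ : IsPrimitiveRoot ζ n) (hg : g ^ n = 1) (p : Submodule ℂ V)
    (hgp : ∀ x ∈ p, g x ∈ p) :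
    Module.finrank ℂ p
      = ∑ k ∈ Finset.range n, Module.finrank ℂ (g.eigenspace (ζ ^ k) ⊓ p : Submodule ℂ V) := by
  have hg' : (g.restrict hgp) ^ n = 1 := by
    rw [Module.End.pow_restrict]
    ext x
    simp [LinearMap.restrict_apply, hg]
  have h := aux_finrank_eq_sum (g.restrict hgp) hn hζ hg'
  rw [h]
  exact Finset.sum_congr rfl fun k _ => aux_eigenspace_restrict g p hgp (ζ ^ k)

lemma aux_mod1 {n a c : ℕ} (ha : a < n) (hc : c < n) :
    (a + (c + n - a) % n) % n = c := by
  rcases le_or_gt a c with h | h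
  · have h1 : (c + n - a) % n = c - a := by
      rw [Nat.mod_eq_sub_mod (by omega), show c + n - a - n = c - a from by omega,
        Nat.mod_eq_of_lt (by omega)]
    rw [h1, show a + (c - a) = c from by omega, Nat.mod_eq_of_lt hc]
  · have h1 : (c + n - a) % n = c + n - a := Nat.mod_eq_of_lt (by omega)
    rw [h1, show a + (c + n - a) = c + n from by omega, Nat.add_mod_right,
      Nat.mod_eq_of_lt hc]

lemma aux_mod2 {n a b : ℕ} (ha : a < n) (hb : b < n) :
    ((a + b) % n + n - a) % n = b := by
  rcases Nat.lt_or_ge (a + b) n with h | h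
  · rw [Nat.mod_eq_of_lt h, show a + b + n - a = b + n from by omega, Nat.add_mod_right,
      Nat.mod_eq_of_lt hb]
  · have h2 : (a + b) % n = a + b - n := by
      rw [Nat.mod_eq_sub_mod h, Nat.mod_eq_of_lt (by omega)]
    rw [h2, show a + b - n + n - a = b from by omega, Nat.mod_eq_of_lt hb]

end Aux

/-- For commuting finite-order automorphisms `g₁, g₂`,
`V⁺(g₁,g₂) = L(g₁)(V) + L(g₂)(V) − L(g₁g₂)(V)` is a non-negative integer. -/
theorem logTrace_pair_nonneg_integer {V : Type} [AddCommGroup V] [Module ℂ V]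
    [FiniteDimensional ℂ V] (g₁ g₂ : V ≃ₗ[ℂ] V) (n : ℕ) (hn : 0 < n)
    (h₁ : g₁ ^ n = 1) (h₂ : g₂ ^ n = 1) (hc : g₁ * g₂ = g₂ * g₁) :
    ∃ m : ℕ,
      logTrace n (g₁ : V →ₗ[ℂ] V) + logTrace n (g₂ : V →ₗ[ℂ] V)
        - logTrace n ((g₁ * g₂ : V ≃ₗ[ℂ] V) : V →ₗ[ℂ] V) = m := by
  classical
  haveI : NeZero n := ⟨hn.ne'⟩
  set ζ : ℂ := Complex.exp (2 * Real.pi * Complex.I / n) with hζdef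
  have hζ : IsPrimitiveRoot ζ n := Complex.isPrimitiveRoot_exp n hn.ne'
  have hexp : ∀ k : ℕ,
      Complex.exp (2 * (Real.pi : ℂ) * Complex.I * ((k : ℂ) / (n : ℂ))) = ζ ^ k := by
    intro k
    rw [hζdef, ← Complex.exp_nat_mul]
    congr 1
    ring
  -- the linear-map versions
  set f₁ : Module.End ℂ V := (g₁ : V →ₗ[ℂ] V) with hf₁def
  set f₂ : Module.End ℂ V := (g₂ : V →ₗ[ℂ] V) with hf₂def
  have hpow : ∀ g : V ≃ₗ[ℂ] V, g ^ n = 1 → ((g : V →ₗ[ℂ] V)) ^ n = 1 := by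
    intro g hg
    ext x
    rw [Module.End.pow_apply, LinearEquiv.coe_coe, ← LinearEquiv.pow_apply, hg]
    rfl
  have hf₁ : f₁ ^ n = 1 := hpow g₁ h₁
  have hf₂ : f₂ ^ n = 1 := hpow g₂ h₂
  have hcomm : f₁ * f₂ = f₂ * f₁ := by
    ext x
    have := congrArg (fun e : V ≃ₗ[ℂ] V => e x) hc
    simpa [hf₁def, hf₂def] using this
  have h12coe : ((g₁ * g₂ : V ≃ₗ[ℂ] V) : V →ₗ[ℂ] V) = f₁ * f₂ := by
    ext x; rfl
  have hf₁₂ : (f₁ * f₂) ^ n = 1 := by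
    have hcomm' : Commute f₁ f₂ := hcomm
    rw [hcomm'.mul_pow, hf₁, hf₂, one_mul]
  -- joint dimensions
  set d : ℕ → ℕ → ℕ := fun a b =>
    Module.finrank ℂ (f₂.eigenspace (ζ ^ b) ⊓ f₁.eigenspace (ζ ^ a) : Submodule ℂ V) with hddef
  -- invariance of eigenspaces under the commuting map
  have hinv : ∀ (f g : Module.End ℂ V), f * g = g * f → ∀ μ : ℂ,
      ∀ x ∈ f.eigenspace μ, g x ∈ f.eigenspace μ := by
    intro f g hfg μ x hx
    rw [Module.End.mem_eigenspace_iff] at hx ⊢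
    have : f (g x) = g (f x) := by
      have := congrArg (fun e : Module.End ℂ V => e x) hfg
      simpa using this
    rw [this, hx, map_smul]
  -- (1) dim E₁(a) = ∑_b d a b
  have hE₁ : ∀ a : ℕ, Module.finrank ℂ (f₁.eigenspace (ζ ^ a))
      = ∑ b ∈ Finset.range n, d a b := by
    intro a
    exact aux_finrank_split f₂ hn hζ hf₂ (f₁.eigenspace (ζ ^ a))
      (hinv f₁ f₂ hcomm (ζ ^ a))
  -- (1') dim E₂(b) = ∑_a d a b
  have hE₂ : ∀ b : ℕ, Module.finrank ℂ (f₂.eigenspace (ζ ^ b))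
      = ∑ a ∈ Finset.range n, d a b := by
    intro b
    have h := aux_finrank_split f₁ hn hζ hf₁ (f₂.eigenspace (ζ ^ b))
      (hinv f₂ f₁ hcomm.symm (ζ ^ b))
    rw [h]
    refine Finset.sum_congr rfl fun a _ => ?_
    simp only [hddef]
    rw [inf_comm (f₁.eigenspace (ζ ^ a)) (f₂.eigenspace (ζ ^ b))]
  -- (2) dim V = ∑_a dim E₁(a) and (3) for f₁f₂
  have htot₁ : Module.finrank ℂ V
      = ∑ a ∈ Finset.range n, Module.finrank ℂ (f₁.eigenspace (ζ ^ a)) :=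
    aux_finrank_eq_sum f₁ hn hζ hf₁
  have htot₁₂ : Module.finrank ℂ V
      = ∑ c ∈ Finset.range n, Module.finrank ℂ ((f₁ * f₂).eigenspace (ζ ^ c)) :=
    aux_finrank_eq_sum (f₁ * f₂) hn hζ hf₁₂
  -- joint eigenspace included in product eigenspace
  have hjoint : ∀ a b : ℕ,
      (f₂.eigenspace (ζ ^ b) ⊓ f₁.eigenspace (ζ ^ a) : Submodule ℂ V)
        ≤ (f₁ * f₂).eigenspace (ζ ^ ((a + b) % n)) := by
    intro a b x hx
    obtain ⟨hx2, hx1⟩ := Submodule.mem_inf.mp hx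
    have hx₂ : f₂ x = ζ ^ b • x := Module.End.mem_eigenspace_iff.mp hx2
    have hx₁ : f₁ x = ζ ^ a • x := Module.End.mem_eigenspace_iff.mp hx1
    refine Module.End.mem_eigenspace_iff.mpr ?_
    have hmul : (f₁ * f₂) x = f₁ (f₂ x) := rfl
    rw [hmul, hx₂, map_smul, hx₁, smul_smul, ← pow_add, add_comm b a,
      pow_eq_pow_mod (a + b) hζ.pow_eq_one]
  -- (4) per-class inequality
  have hle : ∀ c ∈ Finset.range n,
      ∑ a ∈ Finset.range n, d a ((c + n - a) % n)
        ≤ Module.finrank ℂ ((f₁ * f₂).eigenspace (ζ ^ c)) := by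
    intro c hc
    have hcn := Finset.mem_range.mp hc
    have hind : (Finset.range n).SupIndep (fun a =>
        (f₂.eigenspace (ζ ^ ((c + n - a) % n)) ⊓ f₁.eigenspace (ζ ^ a) : Submodule ℂ V)) := by
      refine aux_supIndep f₁ _ (fun a => ζ ^ a) ?_ _ (fun a _ => inf_le_right)
      intro i hi j hj e
      exact hζ.pow_inj (Finset.mem_range.mp hi) (Finset.mem_range.mp hj) e
    have hsum := aux_finrank_sup (Finset.range n) (fun a =>
      (f₂.eigenspace (ζ ^ ((c + n - a) % n)) ⊓ f₁.eigenspace (ζ ^ a) : Submodule ℂ V)) hind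
    have hsup : (Finset.range n).sup (fun a =>
        (f₂.eigenspace (ζ ^ ((c + n - a) % n)) ⊓ f₁.eigenspace (ζ ^ a) : Submodule ℂ V))
        ≤ (f₁ * f₂).eigenspace (ζ ^ c) := by
      refine Finset.sup_le fun a ha => ?_
      have han := Finset.mem_range.mp ha
      have h1 := hjoint a ((c + n - a) % n)
      rwa [aux_mod1 han hcn] at h1
    have hmono := Submodule.finrank_mono hsup
    simp only [hddef]
    rw [← hsum]
    exact hmono
  -- (5) total of the per-class sums equals dim V
  have hswap : ∀ a ∈ Finset.range n,
      ∑ c ∈ Finset.range n, d a ((c + n - a) % n) = ∑ b ∈ Finset.range n, d a b := by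
    intro a ha
    have han := Finset.mem_range.mp ha
    refine Finset.sum_nbij' (fun c => (c + n - a) % n) (fun b => (a + b) % n) ?_ ?_ ?_ ?_ ?_
    · intro c _; exact Finset.mem_range.mpr (Nat.mod_lt _ hn)
    · intro b _; exact Finset.mem_range.mpr (Nat.mod_lt _ hn)
    · intro c hcm
      exact aux_mod1 han (Finset.mem_range.mp hcm)
    · intro b hbm
      exact aux_mod2 han (Finset.mem_range.mp hbm)
    · intro c _; rfl
  have htotD : ∑ c ∈ Finset.range n, ∑ a ∈ Finset.range n, d a ((c + n - a) % n)
      = Module.finrank ℂ V := by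
    rw [Finset.sum_comm]
    rw [Finset.sum_congr rfl hswap]
    rw [htot₁]
    exact (Finset.sum_congr rfl fun a _ => (hE₁ a).symm)
  -- (6) per-class equality
  have hE₁₂ : ∀ c ∈ Finset.range n,
      Module.finrank ℂ ((f₁ * f₂).eigenspace (ζ ^ c))
        = ∑ a ∈ Finset.range n, d a ((c + n - a) % n) := by
    have h := (Finset.sum_eq_sum_iff_of_le hle).mp (by rw [htotD, htot₁₂])
    intro c hc
    exact (h c hc).symm
  -- now compute the logTrace combination
  have L1 : logTrace n (g₁ : V →ₗ[ℂ] V)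
      = ∑ a ∈ Finset.range n, ∑ b ∈ Finset.range n, (a : ℚ) / n * d a b := by
    unfold logTrace
    refine Finset.sum_congr rfl fun a _ => ?_
    rw [hexp a, ← hf₁def, hE₁ a, Nat.cast_sum, Finset.mul_sum]
  have L2' : logTrace n (g₂ : V →ₗ[ℂ] V)
      = ∑ b ∈ Finset.range n, ∑ a ∈ Finset.range n, (b : ℚ) / n * d a b := by
    unfold logTrace
    refine Finset.sum_congr rfl fun b _ => ?_
    rw [hexp b, ← hf₂def, hE₂ b, Nat.cast_sum, Finset.mul_sum]
  have L2 : logTrace n (g₂ : V →ₗ[ℂ] V)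
      = ∑ a ∈ Finset.range n, ∑ b ∈ Finset.range n, (b : ℚ) / n * d a b :=
    L2'.trans Finset.sum_comm
  have L3' : logTrace n ((g₁ * g₂ : V ≃ₗ[ℂ] V) : V →ₗ[ℂ] V)
      = ∑ c ∈ Finset.range n, ∑ a ∈ Finset.range n,
          (c : ℚ) / n * d a ((c + n - a) % n) := by
    unfold logTrace
    refine Finset.sum_congr rfl fun c hc => ?_
    rw [hexp c, h12coe, hE₁₂ c hc, Nat.cast_sum, Finset.mul_sum]
  have L3 : logTrace n ((g₁ * g₂ : V ≃ₗ[ℂ] V) : V →ₗ[ℂ] V)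
      = ∑ a ∈ Finset.range n, ∑ b ∈ Finset.range n,
          (((a + b) % n : ℕ) : ℚ) / n * d a b := by
    rw [L3', Finset.sum_comm]
    refine Finset.sum_congr rfl fun a ha => ?_
    have han := Finset.mem_range.mp ha
    refine Finset.sum_nbij' (fun c => (c + n - a) % n) (fun b => (a + b) % n) ?_ ?_ ?_ ?_ ?_
    · intro c _; exact Finset.mem_range.mpr (Nat.mod_lt _ hn)
    · intro b _; exact Finset.mem_range.mpr (Nat.mod_lt _ hn)
    · intro c hcm
      exact aux_mod1 han (Finset.mem_range.mp hcm)
    · intro b hbm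
      exact aux_mod2 han (Finset.mem_range.mp hbm)
    · intro c hcm
      have hcn := Finset.mem_range.mp hcm
      rw [aux_mod1 han hcn]
  refine ⟨∑ a ∈ Finset.range n, ∑ b ∈ Finset.range n, ((a + b) / n) * d a b, ?_⟩
  rw [L1, L2, L3]
  push_cast
  rw [← Finset.sum_add_distrib, ← Finset.sum_sub_distrib]
  refine Finset.sum_congr rfl fun a _ => ?_
  rw [← Finset.sum_add_distrib, ← Finset.sum_sub_distrib]
  refine Finset.sum_congr rfl fun b _ => ?_
  have hmod := Nat.div_add_mod (a + b) n
  have hq : (n : ℚ) * (((a + b) / n : ℕ) : ℚ) + (((a + b) % n : ℕ) : ℚ)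
      = (a : ℚ) + b := by
    exact_mod_cast congrArg (Nat.cast (R := ℚ)) hmod
  have hn' : (n : ℚ) ≠ 0 := Nat.cast_ne_zero.mpr hn.ne'
  have h5 : (a : ℚ) + b - (((a + b) % n : ℕ) : ℚ) = n * (((a + b) / n : ℕ) : ℚ) := by
    linarith [hq]
  calc (a : ℚ) / n * d a b + (b : ℚ) / n * d a b - (((a + b) % n : ℕ) : ℚ) / n * d a b
      = ((a : ℚ) + b - (((a + b) % n : ℕ) : ℚ)) / n * d a b := by ring
    _ = ((n : ℚ) * (((a + b) / n : ℕ) : ℚ)) / n * d a b := by rw [h5]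
    _ = (((a + b) / n : ℕ) : ℚ) * d a b := by rw [mul_div_cancel_left₀ _ hn']
end

section
/- In the ring R = ℤ[χ]/⟨(χ³−1)²⟩, the class e(χ) := 1 − χ⁻¹ (equivalently 1 − χ⁵, since χ⁶ = 2χ³ − 1 makes χ invertible with χ⁻¹ = 2χ² − χ⁵) satisfies: the inertial K-theory product table of P(1,3,3) for the virtual product, given by 1_ω ⋆ 1_ω = e(χ)·1_{ω⁻¹}, 1_ω ⋆ 1_{ω⁻¹} = e(χ)²·1_1, 1_{ω⁻¹} ⋆ 1_{ω⁻¹} = e(χ)·1_ω, together with 1_1 acting as identity, defines an associative commutative ring structure on the free module R·1_1 ⊕ R·1_ω ⊕ R·1_{ω⁻¹} modulo the relation identifying the 1_1-component with ℤ[χ]/⟨(χ−1)(χ³−1)²⟩. -/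
open Polynomial

/-- `A = ℤ[χ]/⟨(χ−1)(χ³−1)²⟩`, the K-theory of the untwisted sector of `P(1,3,3)`. -/
noncomputable abbrev KA : Type :=
  Polynomial ℤ ⧸ Ideal.span ({(Polynomial.X - 1) * (Polynomial.X ^ 3 - 1) ^ 2} : Set (Polynomial ℤ))

/-- `B = ℤ[χ]/⟨(χ³−1)²⟩`, the K-theory of each twisted sector of `P(1,3,3)`. -/
noncomputable abbrev KB : Type :=
  Polynomial ℤ ⧸ Ideal.span ({(Polynomial.X ^ 3 - 1) ^ 2} : Set (Polynomial ℤ))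

noncomputable def mkA : Polynomial ℤ →+* KA := Ideal.Quotient.mk _
noncomputable def mkB : Polynomial ℤ →+* KB := Ideal.Quotient.mk _

/-- The module `K(I P(1,3,3)) = A·1₁ ⊕ B·1_ω ⊕ B·1_{ω⁻¹}`. -/
noncomputable abbrev KM : Type := KA × KB × KB

/-- The virtual inertial product on `K(I P(1,3,3))`, extended from the table
`1_ω ⋆ 1_ω = e(χ)·1_{ω⁻¹}`, `1_ω ⋆ 1_{ω⁻¹} = e(χ)²·1₁`,
`1_{ω⁻¹} ⋆ 1_{ω⁻¹} = e(χ)·1_ω` by the projection formula, where `π : A → B` is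
the restriction map, `j : B → A` is the pushforward (multiplication by `e(χ)`),
and `e : B` is the Euler class `e(χ)`. -/
noncomputable def kmul (π : KA →+* KB) (j : KB →ₗ[ℤ] KA) (e : KB) (x y : KM) : KM :=
  (x.1 * y.1 + j (e * (x.2.1 * y.2.2 + x.2.2 * y.2.1)),
   π x.1 * y.2.1 + x.2.1 * π y.1 + e * (x.2.2 * y.2.2),
   π x.1 * y.2.2 + x.2.2 * π y.1 + e * (x.2.1 * y.2.1))

/-! ### Auxiliary constructions and lemmas -/

lemma P133.mkB_eq_of (p q w : Polynomial ℤ) (h : p - q = (X ^ 3 - 1) ^ 2 * w) :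
    mkB p = mkB q := by
  rw [mkB, Ideal.Quotient.eq]
  exact Ideal.mem_span_singleton.2 ⟨w, h⟩

lemma P133.mkA_eq_of (p q w : Polynomial ℤ) (h : p - q = (X - 1) * (X ^ 3 - 1) ^ 2 * w) :
    mkA p = mkA q := by
  rw [mkA, Ideal.Quotient.eq]
  exact Ideal.mem_span_singleton.2 ⟨w, h⟩

lemma P133.smul_mkA (p q : Polynomial ℤ) : p • (mkA q) = mkA (p * q) := by
  have := Submodule.Quotient.mk_smul
    (Ideal.span ({(X - 1) * (X ^ 3 - 1) ^ 2} : Set (Polynomial ℤ))) p q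
  simpa [smul_eq_mul, mkA] using this.symm

/-- The restriction map `π : A → B`. -/
noncomputable def P133.π : KA →+* KB :=
  Ideal.Quotient.lift _ mkB (by
    intro a ha
    obtain ⟨w, rfl⟩ := Ideal.mem_span_singleton.1 ha
    have : mkB ((X - 1) * (X ^ 3 - 1) ^ 2 * w) = mkB 0 := by
      apply P133.mkB_eq_of _ _ ((X - 1) * w); ring
    simpa using this)

lemma P133.π_mk (p : Polynomial ℤ) : P133.π (mkA p) = mkB p := rfl

/-- The Euler class `e(χ) = 1 − χ⁻¹` in `A`. -/
noncomputable def P133.cA : KA := 1 - mkA (X ^ 6 - X ^ 5 - 2 * X ^ 3 + 2 * X ^ 2 + 1)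

/-- The pushforward `j : B → A`, multiplication by `e(χ)`. -/
noncomputable def P133.j : KB →ₗ[ℤ] KA :=
  (Submodule.liftQ _ (LinearMap.toSpanSingleton (Polynomial ℤ) KA P133.cA) (by
    intro p hp
    obtain ⟨w, rfl⟩ := Ideal.mem_span_singleton.1 hp
    have h2 : P133.cA = mkA (1 - (X ^ 6 - X ^ 5 - 2 * X ^ 3 + 2 * X ^ 2 + 1)) := by
      simp [P133.cA, map_sub]
    simp only [LinearMap.mem_ker, LinearMap.toSpanSingleton_apply]
    rw [h2, P133.smul_mkA]
    have : mkA ((X ^ 3 - 1) ^ 2 * w * (1 - (X ^ 6 - X ^ 5 - 2 * X ^ 3 + 2 * X ^ 2 + 1))) =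
        mkA 0 := by
      apply P133.mkA_eq_of _ _ (w * (-X ^ 2 * (X ^ 3 - 2))); ring
    simpa using this)).restrictScalars ℤ

lemma P133.j_mk (p : Polynomial ℤ) : P133.j (mkB p) = mkA p * P133.cA := by
  have h : P133.j (mkB p) = p • P133.cA := rfl
  obtain ⟨c, hc⟩ : ∃ c, P133.cA = mkA c :=
    ⟨_, (Ideal.Quotient.mk_surjective P133.cA).choose_spec.symm⟩
  rw [h, hc, P133.smul_mkA, map_mul]

lemma P133.j_mk' (p : Polynomial ℤ) :
    P133.j (mkB p) = mkA (p * (1 - (X ^ 6 - X ^ 5 - 2 * X ^ 3 + 2 * X ^ 2 + 1))) := by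
  rw [P133.j_mk, P133.cA, map_mul, map_sub, map_one]

/-- The projection formula `π ∘ j = e(χ) ·`. -/
lemma P133.π_j (u : KB) :
    P133.π (P133.j u) = (1 - mkB (2 * X ^ 2 - X ^ 5)) * u := by
  obtain ⟨p, rfl⟩ := Ideal.Quotient.mk_surjective u
  have h : (Ideal.Quotient.mk _ p : KB) = mkB p := rfl
  rw [h, P133.j_mk', P133.π_mk]
  have he : (1 : KB) - mkB (2 * X ^ 2 - X ^ 5) =
      mkB (1 - (2 * X ^ 2 - X ^ 5)) := by simp
  rw [he, ← map_mul]
  apply P133.mkB_eq_of _ _ (-p); ring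

lemma P133.he :
    (1 : KB) - mkB (2 * X ^ 2 - X ^ 5) = mkB (1 - (2 * X ^ 2 - X ^ 5)) := by
  simp

set_option maxHeartbeats 1000000 in
/-- The virtual K-theory product table of `P(1,3,3)` defines an associative,
commutative ring structure with identity `1₁` on `A·1₁ ⊕ B·1_ω ⊕ B·1_{ω⁻¹}`:
here `χ` is invertible with `χ⁻¹ = 2χ² − χ⁵` in `B` (since `χ⁶ = 2χ³ − 1`),
`e(χ) = 1 − χ⁻¹`, `π : A → B` is the natural quotient map, and `j : B → A` is
the pushforward, characterized by `j(p) = p·(1 − χ⁻¹)` in `A`. -/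
theorem virtual_product_P133_ring :
    letI χinvB : KB := mkB (2 * Polynomial.X ^ 2 - Polynomial.X ^ 5)
    letI e : KB := 1 - χinvB
    (mkB Polynomial.X * χinvB = 1) ∧
    ∃ (π : KA →+* KB) (j : KB →ₗ[ℤ] KA) (χinvA : KA),
      (∀ p : Polynomial ℤ, π (mkA p) = mkB p) ∧
      (mkA Polynomial.X * χinvA = 1) ∧
      (∀ p : Polynomial ℤ, j (mkB p) = mkA p * (1 - χinvA)) ∧
      (∀ x y : KM, kmul π j e x y = kmul π j e y x) ∧
      (∀ x y z : KM, kmul π j e (kmul π j e x y) z = kmul π j e x (kmul π j e y z)) ∧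
      (∀ x : KM, kmul π j e ((1 : KA), (0 : KB), (0 : KB)) x = x) := by
  refine ⟨?_, P133.π, P133.j, mkA (X ^ 6 - X ^ 5 - 2 * X ^ 3 + 2 * X ^ 2 + 1),
      P133.π_mk, ?_, ?_, ?_, ?_, ?_⟩
  · -- χ · χ⁻¹ = 1 in B
    rw [← map_mul, ← map_one mkB]
    apply P133.mkB_eq_of _ _ (-1); ring
  · -- χ · χ⁻¹ = 1 in A
    rw [← map_mul, ← map_one mkA]
    apply P133.mkA_eq_of _ _ 1; ring
  · -- characterization of j
    intro p
    rw [P133.j_mk, P133.cA]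
  · -- commutativity
    rintro ⟨a₁, b₁, c₁⟩ ⟨a₂, b₂, c₂⟩
    simp only [kmul, Prod.mk.injEq]
    refine ⟨?_, by ring, by ring⟩
    rw [show (1 - mkB (2 * X ^ 2 - X ^ 5)) * (b₁ * c₂ + c₁ * b₂) =
        (1 - mkB (2 * X ^ 2 - X ^ 5)) * (b₂ * c₁ + c₂ * b₁) from by ring]
    ring
  · -- associativity
    rintro ⟨a₁, b₁, c₁⟩ ⟨a₂, b₂, c₂⟩ ⟨a₃, b₃, c₃⟩
    obtain ⟨p₁, rfl⟩ := Ideal.Quotient.mk_surjective a₁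
    obtain ⟨p₂, rfl⟩ := Ideal.Quotient.mk_surjective a₂
    obtain ⟨p₃, rfl⟩ := Ideal.Quotient.mk_surjective a₃
    obtain ⟨q₁, rfl⟩ := Ideal.Quotient.mk_surjective b₁
    obtain ⟨q₂, rfl⟩ := Ideal.Quotient.mk_surjective b₂
    obtain ⟨q₃, rfl⟩ := Ideal.Quotient.mk_surjective b₃
    obtain ⟨r₁, rfl⟩ := Ideal.Quotient.mk_surjective c₁
    obtain ⟨r₂, rfl⟩ := Ideal.Quotient.mk_surjective c₂
    obtain ⟨r₃, rfl⟩ := Ideal.Quotient.mk_surjective c₃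
    show kmul _ _ _ (kmul _ _ _ (mkA p₁, mkB q₁, mkB r₁) (mkA p₂, mkB q₂, mkB r₂))
        (mkA p₃, mkB q₃, mkB r₃) =
      kmul _ _ _ (mkA p₁, mkB q₁, mkB r₁)
        (kmul _ _ _ (mkA p₂, mkB q₂, mkB r₂) (mkA p₃, mkB q₃, mkB r₃))
    simp only [kmul, Prod.mk.injEq, P133.π_mk, P133.he]
    simp only [← map_mul, ← map_add, P133.j_mk', P133.π_mk]
    refine ⟨congrArg mkA (by ring), ?_, ?_⟩
    · exact P133.mkB_eq_of _ _
        ((1 - (2 * X ^ 2 - X ^ 5)) * (q₁ * q₂ * r₃ - r₁ * q₂ * q₃)) (by ring)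
    · exact P133.mkB_eq_of _ _
        ((1 - (2 * X ^ 2 - X ^ 5)) * (r₁ * r₂ * q₃ - q₁ * r₂ * r₃)) (by ring)
  · -- identity
    rintro ⟨a, b, c⟩
    simp only [kmul]
    simp
end

section
/- Let g₁, g₂ be commuting finite-order automorphisms of a finite-dimensional complex vector space V, with ages a₁ = L(g₁⁻¹)(V), a₂ = L(g₂⁻¹)(V), a₁₂ = L((g₁g₂)⁻¹)(V). Then a₁ + a₂ − a₁₂ = V⁻-rank := L(g₁⁻¹)(V) + L(g₂⁻¹)(V) − L(g₂⁻¹g₁⁻¹)(V) is a non-negative integer, and the sign (−1)^{a₁+a₂−a₁₂} is well-defined; consequently e^{iπa₁₂}·(−1)^{a₁+a₂−a₁₂} = e^{iπ(a₁+a₂)}. -/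
set_option linter.unusedSectionVars false


namespace AgeAux

open Module Module.End Complex Finset Submodule

noncomputable def ω (n k : ℕ) : ℂ :=
  Complex.exp (2 * (Real.pi : ℂ) * Complex.I * ((k : ℂ) / (n : ℂ)))

lemma ω_eq_pow (n k : ℕ) : ω n k = Complex.exp (2 * Real.pi * Complex.I / n) ^ k := by
  rw [← Complex.exp_nat_mul]
  unfold ω
  congr 1
  ring

lemma ω_inj {n : ℕ} (hn : 0 < n) {k l : ℕ} (hk : k < n) (hl : l < n)
    (h : ω n k = ω n l) : k = l := by
  rw [ω_eq_pow, ω_eq_pow] at h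
  exact (Complex.isPrimitiveRoot_exp n hn.ne').pow_inj hk hl h

lemma exists_ω {n : ℕ} (hn : 0 < n) {μ : ℂ} (hμ : μ ^ n = 1) :
    ∃ k < n, ω n k = μ := by
  have : NeZero n := ⟨hn.ne'⟩
  obtain ⟨i, hi, h⟩ := (Complex.isPrimitiveRoot_exp n hn.ne').eq_pow_of_pow_eq_one hμ
  exact ⟨i, hi, by rw [ω_eq_pow]; exact h⟩

lemma ω_mul (n a b : ℕ) : ω n a * ω n b = ω n (a + b) := by
  rw [ω, ω, ω, ← Complex.exp_add]
  congr 1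
  push_cast
  ring

lemma ω_mod {n : ℕ} (hn : 0 < n) (k : ℕ) : ω n k = ω n (k % n) := by
  have hnn : (n : ℂ) ≠ 0 := Nat.cast_ne_zero.mpr hn.ne'
  have hk : (k : ℂ) = (k % n : ℕ) + n * ((k / n : ℕ) : ℂ) := by
    exact_mod_cast (congrArg (Nat.cast : ℕ → ℂ) (Nat.mod_add_div k n)).symm
  rw [ω, ω, hk]
  rw [show 2 * (Real.pi : ℂ) * Complex.I * ((((k % n : ℕ) : ℂ) + n * ((k / n : ℕ) : ℂ)) / n)
      = 2 * (Real.pi : ℂ) * Complex.I * (((k % n : ℕ) : ℂ) / n)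
        + ((k / n : ℕ) : ℂ) * (2 * Real.pi * Complex.I) by
    field_simp]
  rw [Complex.exp_add, Complex.exp_nat_mul_two_pi_mul_I, mul_one]

variable {V : Type} [AddCommGroup V] [Module ℂ V] [FiniteDimensional ℂ V]

lemma pow_apply_eigen {f : Module.End ℂ V} {μ : ℂ} {x : V} (hx : f x = μ • x) (k : ℕ) :
    (f ^ k) x = μ ^ k • x := by
  induction k with
  | zero => simp
  | succ k ih =>
      rw [pow_succ', Module.End.mul_apply, ih, map_smul, hx, smul_smul, ← pow_succ]

lemma eigenvalue_pow_eq_one {n : ℕ} {f : Module.End ℂ V} (hf : f ^ n = 1) {μ : ℂ}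
    (h : f.eigenspace μ ≠ ⊥) : μ ^ n = 1 := by
  obtain ⟨x, hx, hx0⟩ := Submodule.exists_mem_ne_zero_of_ne_bot h
  rw [mem_eigenspace_iff] at hx
  have h1 : (f ^ n) x = μ ^ n • x := pow_apply_eigen hx n
  rw [hf] at h1
  have : (μ ^ n - 1) • x = 0 := by
    rw [sub_smul, one_smul, ← h1]; simp
  have h2 : (μ ^ n - 1) = 0 := by
    rcases smul_eq_zero.mp this with h | h
    · exact h
    · exact absurd h hx0
  linear_combination h2

lemma isFinSS {n : ℕ} (hn : 0 < n) {f : Module.End ℂ V} (hf : f ^ n = 1) :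
    f.IsFinitelySemisimple := by
  have hsq : Squarefree (Polynomial.X ^ n - Polynomial.C (1 : ℂ)) :=
    (Polynomial.separable_X_pow_sub_C (1 : ℂ)
      (by exact_mod_cast Nat.cast_ne_zero.mpr hn.ne') one_ne_zero).squarefree
  have : Polynomial.aeval f (Polynomial.X ^ n - Polynomial.C (1 : ℂ)) = 0 := by
    simp only [map_sub, map_pow, Polynomial.aeval_X, Polynomial.aeval_C, map_one, hf, sub_self]
  exact (Module.End.isSemisimple_of_squarefree_aeval_eq_zero hsq this).isFinitelySemisimple

lemma maxGen_eq {n : ℕ} (hn : 0 < n) {f : Module.End ℂ V} (hf : f ^ n = 1) (μ : ℂ) :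
    f.maxGenEigenspace μ = f.eigenspace μ :=
  (isFinSS hn hf).maxGenEigenspace_eq_eigenspace μ

lemma finrank_sup_eq_sum {ι : Type*} [DecidableEq ι] {p : ι → Submodule ℂ V}
    (s : Finset ι) (hp : s.SupIndep p) :
    finrank ℂ ↥(s.sup p) = ∑ i ∈ s, finrank ℂ ↥(p i) := by
  classical
  induction s using Finset.induction_on with
  | empty => simp
  | @insert a s ha ih =>
    have hs : s.SupIndep p := hp.subset (Finset.subset_insert a s)
    have hd : Disjoint (p a) (s.sup p) :=
      hp (Finset.subset_insert a s) (Finset.mem_insert_self a s) ha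
    have h := Submodule.finrank_sup_add_finrank_inf_eq (p a) (s.sup p)
    rw [hd.eq_bot, finrank_bot, add_zero] at h
    rw [Finset.sup_insert, Finset.sum_insert ha, ← ih hs, h]

lemma supIndep_of_injOn {ι κ : Type*} {q : κ → Submodule ℂ V} (hq : iSupIndep q)
    {e : ι → κ} (s : Finset ι) (he : Set.InjOn e s) : s.SupIndep fun i => q (e i) := by
  intro t ht i hi hit
  refine (hq (e i)).mono_right (Finset.sup_le fun j hj => ?_)
  exact le_iSup₂ (f := fun k (_ : k ≠ e i) => q k) (e j)
    (fun h => hit (by rwa [he (ht hj) hi h] at hj))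

lemma key {n : ℕ} (hn : 0 < n) (A B : Module.End ℂ V) (hA : A ^ n = 1) (hB : B ^ n = 1)
    (hAB : Commute A B) :
    ∃ m : ℕ, logTrace n A + logTrace n B - logTrace n (B * A) = (m : ℚ) := by
  classical
  set P : Finset (ℕ × ℕ) := Finset.range n ×ˢ Finset.range n with hP
  set W : ℕ × ℕ → Submodule ℂ V :=
    fun p => A.eigenspace (ω n p.1) ⊓ B.eigenspace (ω n p.2) with hW
  -- the Bool-indexed family
  set F : Bool → Module.End ℂ V := fun b => cond b B A with hF
  have hFcomm : ∀ i j, Commute (F i) (F j) := by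
    intro i j
    cases i <;> cases j
    · exact Commute.refl _
    · exact hAB
    · exact hAB.symm
    · exact Commute.refl _
  have hmap : ∀ i j φ, Set.MapsTo (F i) ((F j).maxGenEigenspace φ) ((F j).maxGenEigenspace φ) :=
    fun i j φ => Module.End.mapsTo_maxGenEigenspace_of_comm (hFcomm j i) φ
  have hiInf : ∀ χ : Bool → ℂ,
      (⨅ i, (F i).maxGenEigenspace (χ i)) = B.eigenspace (χ true) ⊓ A.eigenspace (χ false) := by
    intro χ
    rw [iInf_bool_eq]
    simp only [hF, cond_true, cond_false, maxGen_eq hn hB, maxGen_eq hn hA]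
  have hind : iSupIndep (fun χ : Bool → ℂ => ⨅ i, (F i).maxGenEigenspace (χ i)) :=
    Module.End.independent_iInf_maxGenEigenspace_of_forall_mapsTo F hmap
  -- the pair parametrisation
  set e : ℕ × ℕ → (Bool → ℂ) := fun p b => cond b (ω n p.2) (ω n p.1) with he
  have hePmem : ∀ p ∈ P, p.1 < n ∧ p.2 < n := by
    intro p hp
    rw [hP, Finset.mem_product, Finset.mem_range, Finset.mem_range] at hp
    exact hp
  have heinj : Set.InjOn e P := by
    intro p hp q hq hpq
    have h1 := congrFun hpq true
    have h2 := congrFun hpq false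
    simp only [he, cond_true, cond_false] at h1 h2
    obtain ⟨hp1, hp2⟩ := hePmem p hp
    obtain ⟨hq1, hq2⟩ := hePmem q hq
    exact Prod.ext (ω_inj hn hp1 hq1 h2) (ω_inj hn hp2 hq2 h1)
  have hWe : (fun p => (⨅ i, (F i).maxGenEigenspace (e p i))) = W := by
    funext p
    rw [hiInf, hW]
    simp only [he, cond_true, cond_false]
    rw [inf_comm]
  have hWind : P.SupIndep W := by
    rw [← hWe]
    exact supIndep_of_injOn hind P heinj
  -- spanning
  have hWtop : P.sup W = ⊤ := by
    refine le_antisymm le_top ?_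
    rw [← Module.End.iSup_iInf_maxGenEigenspace_eq_top_of_iSup_maxGenEigenspace_eq_top_of_commute
      F (fun i j _ => hFcomm i j) (fun i => Module.End.iSup_maxGenEigenspace_eq_top (F i))]
    refine iSup_le fun χ => ?_
    by_cases h0 : (⨅ i, (F i).maxGenEigenspace (χ i)) = ⊥
    · rw [h0]; exact bot_le
    · rw [hiInf] at h0 ⊢
      have hBne : B.eigenspace (χ true) ≠ ⊥ := fun h => h0 (by rw [h, bot_inf_eq])
      have hAne : A.eigenspace (χ false) ≠ ⊥ := fun h => h0 (by rw [h, inf_bot_eq])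
      obtain ⟨k, hk, hωk⟩ := exists_ω hn (eigenvalue_pow_eq_one hA hAne)
      obtain ⟨l, hl, hωl⟩ := exists_ω hn (eigenvalue_pow_eq_one hB hBne)
      have hmem : (k, l) ∈ P := by
        rw [hP, Finset.mem_product, Finset.mem_range, Finset.mem_range]; exact ⟨hk, hl⟩
      refine le_trans ?_ (Finset.le_sup hmem)
      rw [hW]
      simp only [hωk, hωl]
      rw [inf_comm]
  have hVdim : finrank ℂ V = ∑ p ∈ P, finrank ℂ (W p) := by
    rw [← finrank_sup_eq_sum P hWind, hWtop, finrank_top]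
  -- the master counting fact
  have hsub : ∀ (f : Module.End ℂ V), f ^ n = 1 → ∀ c : ℕ × ℕ → ℕ,
      (∀ p ∈ P, c p < n) → (∀ p ∈ P, W p ≤ f.eigenspace (ω n (c p))) →
      ∀ m ∈ Finset.range n, finrank ℂ (f.eigenspace (ω n m)) =
        ∑ p ∈ P.filter (fun p => c p = m), finrank ℂ (W p) := by
    intro f hfn c hc hwle
    set E : ℕ → Submodule ℂ V := fun m => f.eigenspace (ω n m) with hE
    have hEind : (Finset.range n).SupIndep E :=
      supIndep_of_injOn (Module.End.eigenspaces_iSupIndep f) (Finset.range n)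
        (fun k hk l hl h => ω_inj hn (Finset.mem_range.mp hk) (Finset.mem_range.mp hl) h)
    have hEtop : (Finset.range n).sup E = ⊤ := by
      refine le_antisymm le_top ?_
      rw [← Module.End.iSup_maxGenEigenspace_eq_top f]
      refine iSup_le fun μ => ?_
      rw [maxGen_eq hn hfn]
      by_cases h0 : f.eigenspace μ = ⊥
      · rw [h0]; exact bot_le
      · obtain ⟨k, hk, hωk⟩ := exists_ω hn (eigenvalue_pow_eq_one hfn h0)
        refine le_trans ?_ (Finset.le_sup (Finset.mem_range.mpr hk))
        rw [hE]; simp only [hωk]; exact le_rfl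
    have hEdim : finrank ℂ V = ∑ m ∈ Finset.range n, finrank ℂ (E m) := by
      rw [← finrank_sup_eq_sum (Finset.range n) hEind, hEtop, finrank_top]
    have hle : ∀ m ∈ Finset.range n,
        ∑ p ∈ P.filter (fun p => c p = m), finrank ℂ (W p) ≤ finrank ℂ (E m) := by
      intro m hm
      rw [← finrank_sup_eq_sum _ (hWind.subset (Finset.filter_subset _ _))]
      refine Submodule.finrank_mono (Finset.sup_le fun p hp => ?_)
      obtain ⟨hpP, hpc⟩ := Finset.mem_filter.mp hp
      have := hwle p hpP
      rwa [hpc] at this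
    have hsumeq : ∑ m ∈ Finset.range n, ∑ p ∈ P.filter (fun p => c p = m), finrank ℂ (W p)
        = ∑ m ∈ Finset.range n, finrank ℂ (E m) := by
      rw [Finset.sum_fiberwise_of_maps_to (fun p hp => Finset.mem_range.mpr (hc p hp)), ← hVdim,
        hEdim]
    intro m hm
    exact ((Finset.sum_eq_sum_iff_of_le hle).mp hsumeq m hm).symm
  -- instantiate three times
  have hCn : (B * A) ^ n = 1 := by
    rw [hAB.symm.mul_pow, hA, hB, one_mul]
  have hsubA := hsub A hA Prod.fst (fun p hp => (hePmem p hp).1) (fun p hp => inf_le_left)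
  have hsubB := hsub B hB Prod.snd (fun p hp => (hePmem p hp).2) (fun p hp => inf_le_right)
  have hsubC := hsub (B * A) hCn (fun p => (p.1 + p.2) % n)
    (fun p hp => Nat.mod_lt _ hn)
    (by
      intro p hp x hx
      obtain ⟨hxA, hxB⟩ := Submodule.mem_inf.mp hx
      rw [Module.End.mem_eigenspace_iff] at hxA hxB ⊢
      rw [Module.End.mul_apply, hxA, map_smul, hxB, smul_smul, mul_comm, ω_mul, ← ω_mod hn,
        Nat.add_comm p.2 p.1])
  -- translate logTrace
  have hLT : ∀ (f : Module.End ℂ V) (c : ℕ × ℕ → ℕ),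
      (∀ p ∈ P, c p < n) →
      (∀ m ∈ Finset.range n, finrank ℂ (f.eigenspace (ω n m)) =
        ∑ p ∈ P.filter (fun p => c p = m), finrank ℂ (W p)) →
      logTrace n f = ∑ p ∈ P, (c p : ℚ) / (n : ℚ) * (finrank ℂ (W p) : ℚ) := by
    intro f c hc hf
    have : logTrace n f = ∑ m ∈ Finset.range n, (m : ℚ) / (n : ℚ)
        * (finrank ℂ (f.eigenspace (ω n m)) : ℚ) := rfl
    rw [this, ← Finset.sum_fiberwise_of_maps_to (fun p hp => Finset.mem_range.mpr (hc p hp))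
      (fun p => (c p : ℚ) / (n : ℚ) * (finrank ℂ (W p) : ℚ))]
    refine Finset.sum_congr rfl fun m hm => ?_
    rw [hf m hm]
    push_cast
    rw [Finset.mul_sum]
    refine Finset.sum_congr rfl fun p hp => ?_
    rw [(Finset.mem_filter.mp hp).2]
  have hLA := hLT A Prod.fst (fun p hp => (hePmem p hp).1) hsubA
  have hLB := hLT B Prod.snd (fun p hp => (hePmem p hp).2) hsubB
  have hLC := hLT (B * A) (fun p => (p.1 + p.2) % n) (fun p hp => Nat.mod_lt _ hn) hsubC
  refine ⟨∑ p ∈ P, (p.1 + p.2) / n * finrank ℂ (W p), ?_⟩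
  rw [hLA, hLB, hLC, ← Finset.sum_add_distrib, ← Finset.sum_sub_distrib]
  push_cast
  refine Finset.sum_congr rfl fun p hp => ?_
  have hdm : ((p.1 + p.2 : ℕ) : ℚ) = n * ((p.1 + p.2) / n : ℕ) + (((p.1 + p.2) % n : ℕ) : ℚ) := by
    exact_mod_cast (congrArg (Nat.cast : ℕ → ℚ) (Nat.div_add_mod (p.1 + p.2) n)).symm
  have hnQ : (n : ℚ) ≠ 0 := Nat.cast_ne_zero.mpr hn.ne'
  field_simp
  push_cast at hdm ⊢
  nlinarith [hdm]

lemma coe_toLinearMap_pow (e : V ≃ₗ[ℂ] V) (k : ℕ) :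
    ((e ^ k : V ≃ₗ[ℂ] V) : V →ₗ[ℂ] V) = ((e : V →ₗ[ℂ] V)) ^ k := by
  induction k with
  | zero => simp; rfl
  | succ k ih => rw [pow_succ, pow_succ, LinearEquiv.coe_toLinearMap_mul, ih]

end AgeAux

/-- With ages `a₁ = L(g₁⁻¹)(V)`, `a₂ = L(g₂⁻¹)(V)`, `a₁₂ = L((g₁g₂)⁻¹)(V)`,
the quantity `a₁ + a₂ − a₁₂` equals the `V⁻`-rank
`L(g₁⁻¹)(V) + L(g₂⁻¹)(V) − L(g₂⁻¹g₁⁻¹)(V)`, is a non-negative integer `m`, and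
`e^{iπa₁₂}·(−1)^m = e^{iπ(a₁+a₂)}`. -/
theorem age_sign_identity {V : Type} [AddCommGroup V] [Module ℂ V]
    [FiniteDimensional ℂ V] (g₁ g₂ : V ≃ₗ[ℂ] V) (n : ℕ) (hn : 0 < n)
    (h₁ : g₁ ^ n = 1) (h₂ : g₂ ^ n = 1) (hc : g₁ * g₂ = g₂ * g₁) :
    letI a₁ : ℚ := logTrace n ((g₁⁻¹ : V ≃ₗ[ℂ] V) : V →ₗ[ℂ] V)
    letI a₂ : ℚ := logTrace n ((g₂⁻¹ : V ≃ₗ[ℂ] V) : V →ₗ[ℂ] V)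
    letI a₁₂ : ℚ := logTrace n (((g₁ * g₂)⁻¹ : V ≃ₗ[ℂ] V) : V →ₗ[ℂ] V)
    ∃ m : ℕ,
      (a₁ + a₂ - a₁₂
          = logTrace n ((g₁⁻¹ : V ≃ₗ[ℂ] V) : V →ₗ[ℂ] V)
            + logTrace n ((g₂⁻¹ : V ≃ₗ[ℂ] V) : V →ₗ[ℂ] V)
            - logTrace n ((g₂⁻¹ * g₁⁻¹ : V ≃ₗ[ℂ] V) : V →ₗ[ℂ] V)) ∧
      (a₁ + a₂ - a₁₂ = (m : ℚ)) ∧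
      Complex.exp (Real.pi * Complex.I * (a₁₂ : ℂ)) * (-1 : ℂ) ^ m
        = Complex.exp (Real.pi * Complex.I * ((a₁ : ℂ) + (a₂ : ℂ))) := by
  have hAn : ((g₁⁻¹ : V ≃ₗ[ℂ] V) : V →ₗ[ℂ] V) ^ n = 1 := by
    rw [← AgeAux.coe_toLinearMap_pow, inv_pow, h₁, inv_one, LinearEquiv.coe_toLinearMap_one]
    rfl
  have hBn : ((g₂⁻¹ : V ≃ₗ[ℂ] V) : V →ₗ[ℂ] V) ^ n = 1 := by
    rw [← AgeAux.coe_toLinearMap_pow, inv_pow, h₂, inv_one, LinearEquiv.coe_toLinearMap_one]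
    rfl
  have hABc : Commute ((g₁⁻¹ : V ≃ₗ[ℂ] V) : V →ₗ[ℂ] V) ((g₂⁻¹ : V ≃ₗ[ℂ] V) : V →ₗ[ℂ] V) := by
    have h := (Commute.inv_inv (a := g₁) (b := g₂) hc)
    show _ = _
    rw [← LinearEquiv.coe_toLinearMap_mul, ← LinearEquiv.coe_toLinearMap_mul, h.eq]
  obtain ⟨m, hm⟩ := AgeAux.key hn _ _ hAn hBn hABc
  have h12 : logTrace n (((g₁ * g₂)⁻¹ : V ≃ₗ[ℂ] V) : V →ₗ[ℂ] V)
      = logTrace n (((g₂⁻¹ : V ≃ₗ[ℂ] V) : V →ₗ[ℂ] V) * ((g₁⁻¹ : V ≃ₗ[ℂ] V) : V →ₗ[ℂ] V)) := by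
    rw [mul_inv_rev, LinearEquiv.coe_toLinearMap_mul]
  have hq : logTrace n ((g₁⁻¹ : V ≃ₗ[ℂ] V) : V →ₗ[ℂ] V)
      + logTrace n ((g₂⁻¹ : V ≃ₗ[ℂ] V) : V →ₗ[ℂ] V)
      - logTrace n (((g₁ * g₂)⁻¹ : V ≃ₗ[ℂ] V) : V →ₗ[ℂ] V) = (m : ℚ) := by
    rw [h12]; exact hm
  refine ⟨m, ?_, hq, ?_⟩
  · rw [mul_inv_rev]
  · have hc3 : (logTrace n ((g₁⁻¹ : V ≃ₗ[ℂ] V) : V →ₗ[ℂ] V) : ℂ)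
        + (logTrace n ((g₂⁻¹ : V ≃ₗ[ℂ] V) : V →ₗ[ℂ] V) : ℂ)
        = (logTrace n (((g₁ * g₂)⁻¹ : V ≃ₗ[ℂ] V) : V →ₗ[ℂ] V) : ℂ) + (m : ℂ) := by
      have : logTrace n ((g₁⁻¹ : V ≃ₗ[ℂ] V) : V →ₗ[ℂ] V)
          + logTrace n ((g₂⁻¹ : V ≃ₗ[ℂ] V) : V →ₗ[ℂ] V)
          = logTrace n (((g₁ * g₂)⁻¹ : V ≃ₗ[ℂ] V) : V →ₗ[ℂ] V) + (m : ℚ) := by linarith [hq]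
      exact_mod_cast congrArg (Rat.cast : ℚ → ℂ) this
    rw [show (Real.pi : ℂ) * Complex.I
        * ((logTrace n ((g₁⁻¹ : V ≃ₗ[ℂ] V) : V →ₗ[ℂ] V) : ℂ)
          + (logTrace n ((g₂⁻¹ : V ≃ₗ[ℂ] V) : V →ₗ[ℂ] V) : ℂ))
        = Real.pi * Complex.I * (logTrace n (((g₁ * g₂)⁻¹ : V ≃ₗ[ℂ] V) : V →ₗ[ℂ] V) : ℂ)
          + (m : ℂ) * (Real.pi * Complex.I) from by rw [hc3]; ring,
      Complex.exp_add, Complex.exp_nat_mul, Complex.exp_pi_mul_I]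
end
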